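/- arXiv:2211.14028 — 4 statements merged into one kernel-verified Lean document; each statement's English description precedes it below -/
import Mathlib

section
/- Let A_1 ⋉ ⋯ ⋉ A_d be an automata cascade with d ≥ 2 components, where A_i is an automaton with input alphabet Σ_1 × ⋯ × Σ_i and output alphabet Σ_{i+1}, and write A_i also for the string function it implements. Then the string function implemented by the cascade equals the composition overline(I* × A_1) ∘ overline(I* × A_2) ∘ ⋯ ∘ overline(I* × A_{d−1}) ∘ A_d. -/
universe u

/-- A nonempty string over `σ`: first letter together with the remaining letters. -/
def NEStr (σ : Type u) : Type u := σ × List σ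

/-- The underlying list of letters of a nonempty string. -/
def NEStr.toList {σ : Type u} (x : NEStr σ) : List σ := x.1 :: x.2

/-- The last letter of a nonempty string. -/
def NEStr.lastLetter {σ : Type u} (x : NEStr σ) : σ := x.2.getLastD x.1

/-- Composition in the paper's order: `(f ∘ g)(x) = g (f x)`. -/
def pcomp {α β γ : Type*} (f : α → β) (g : β → γ) : α → γ := fun x => g (f x)

/-- Cross product of functions: `(f × h)(x) = ⟨f x, h x⟩`. -/
def cross {α β γ : Type*} (f : α → β) (h : α → γ) : α → β × γ := fun x => (f x, h x)

/-- For `f : σ → γ`, the function `f*` maps a nonempty string `σ₁ … σₙ` to `f σₙ`. -/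
def star {σ γ : Type*} (f : σ → γ) : NEStr σ → γ := fun x => f (NEStr.lastLetter x)

/-- For `g` on nonempty strings, `overline g` maps `σ₁ … σₙ` to the nonempty
string `g(σ₁) g(σ₁σ₂) ⋯ g(σ₁ … σₙ)`. -/
def overline {σ γ : Type*} (g : NEStr σ → γ) : NEStr σ → NEStr γ :=
  fun x => (g (x.1, []), (List.range x.2.length).map fun i => g (x.1, x.2.take (i + 1)))

/-- An automaton with input alphabet `σ` and output alphabet `γ`:
states, transition function, initial state, and output function. -/
structure Aut (σ γ : Type u) : Type (u + 1) where
  Q : Type u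
  δ : Q → σ → Q
  init : Q
  θ : Q → σ → γ

/-- The string function implemented by an automaton:
`A(σ₁ … σₘ) = θ(δ(q_init, σ₁ … σₘ₋₁), σₘ)`. -/
def Aut.fn {σ γ : Type u} (A : Aut σ γ) : NEStr σ → γ :=
  fun w => A.θ ((NEStr.toList w).dropLast.foldl A.δ A.init) (NEStr.lastLetter w)

/-- An automata cascade `A₁ ⋉ ⋯ ⋉ A_d`: component `A_i` reads the input of the
preceding component together with its output, i.e. `A_{i+1}` has input alphabet
`(Σ₁ × ⋯ × Σ_i) × Σ_{i+1}`. -/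
inductive Cascade : Type u → Type u → Type (u + 1)
  | single {σ γ : Type u} : Aut σ γ → Cascade σ γ
  | cons {σ γ₁ γ : Type u} : Aut σ γ₁ → Cascade (σ × γ₁) γ → Cascade σ γ

/-- The number `d` of components of a cascade. -/
def Cascade.length : ∀ {σ γ : Type u}, Cascade σ γ → ℕ
  | _, _, .single _ => 1
  | _, _, .cons _ rest => rest.length + 1

/-- The product automaton corresponding to a cascade: its states are tuples of
component states, each component reads the external input together with the
outputs of the preceding components, and the overall output is the output of
the last component. -/
def Cascade.toAut : ∀ {σ γ : Type u}, Cascade σ γ → Aut σ γ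
  | _, _, .single A => A
  | _, _, .cons A rest =>
    let R := rest.toAut
    { Q := A.Q × R.Q
      δ := fun p s => (A.δ p.1 s, R.δ p.2 (s, A.θ p.1 s))
      init := (A.init, R.init)
      θ := fun p s => R.θ p.2 (s, A.θ p.1 s) }

/-- The composition `overline(I* × A₁) ∘ ⋯ ∘ overline(I* × A_{d−1}) ∘ A_d`. -/
def Cascade.funComp : ∀ {σ γ : Type u}, Cascade σ γ → (NEStr σ → γ)
  | _, _, .single A => A.fn
  | _, _, .cons A rest =>
    pcomp (overline (cross (star (id : _ → _)) A.fn)) rest.funComp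


section Aux
variable {σ γ₁ γ : Type u}

lemma overline_concat (g : NEStr σ → γ) (a : σ) (l : List σ) (b : σ) :
    NEStr.toList (overline g (a, l ++ [b]))
      = NEStr.toList (overline g (a, l)) ++ [g (a, l ++ [b])] := by
  simp only [overline, NEStr.toList, List.length_append, List.length_cons,
    List.length_nil, Nat.zero_add, List.range_succ, List.map_append, List.map_cons,
    List.map_nil, List.cons_append]
  congr 1
  congr 1
  · apply List.map_congr_left
    intro i hi
    rw [List.mem_range] at hi
    rw [List.take_append_of_le_length (by omega)]
  · rw [List.take_of_length_le (by simp)]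

lemma lastLetter_concat (a : σ) (l : List σ) (b : σ) :
    NEStr.lastLetter ((a, l ++ [b]) : NEStr σ) = b := by
  simp [NEStr.lastLetter]

lemma lastLetter_toList (x : NEStr σ) (d : σ) :
    x.toList.getLastD d = x.lastLetter := by
  show (x.1 :: x.2).getLastD d = _
  rw [List.getLastD_cons]
  rfl

lemma dropLast_cons_concat (a : σ) (l : List σ) (b : σ) :
    (a :: (l ++ [b])).dropLast = a :: l := by
  rw [← List.cons_append, List.dropLast_concat]

/-- The product of a head automaton with an arbitrary tail automaton. -/
def prodAut (A : Aut σ γ₁) (R : Aut (σ × γ₁) γ) : Aut σ γ where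
  Q := A.Q × R.Q
  δ := fun p s => (A.δ p.1 s, R.δ p.2 (s, A.θ p.1 s))
  init := (A.init, R.init)
  θ := fun p s => R.θ p.2 (s, A.θ p.1 s)

lemma prod_run (A : Aut σ γ₁) (R : Aut (σ × γ₁) γ) (a : σ) (l : List σ) :
    (a :: l).foldl (prodAut A R).δ (prodAut A R).init
      = ((a :: l).foldl A.δ A.init,
         (NEStr.toList (overline (cross (_root_.star (id : σ → σ)) A.fn) (a, l))).foldl
            R.δ R.init) := by
  induction l using List.reverseRecOn with
  | nil =>
      simp [prodAut, overline, NEStr.toList, cross, _root_.star, NEStr.lastLetter,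
        Aut.fn]
  | append_singleton l b ih =>
      rw [overline_concat, List.foldl_append, ← List.cons_append, List.foldl_append, ih]
      simp only [List.foldl_cons, List.foldl_nil, prodAut]
      have : cross (_root_.star (id : σ → σ)) A.fn (a, l ++ [b])
          = (b, A.θ ((a :: l).foldl A.δ A.init) b) := by
        simp [cross, _root_.star, lastLetter_concat, Aut.fn, NEStr.toList,
          dropLast_cons_concat]
      rw [this]
      simp

lemma prodAut_fn (A : Aut σ γ₁) (R : Aut (σ × γ₁) γ) :
    (prodAut A R).fn = pcomp (overline (cross (_root_.star (id : σ → σ)) A.fn)) R.fn := by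
  funext w
  obtain ⟨a, l⟩ := w
  induction l using List.reverseRecOn with
  | nil =>
      simp [Aut.fn, pcomp, prodAut, overline, NEStr.toList, NEStr.lastLetter,
        cross, _root_.star]
  | append_singleton l b _ =>
      set g := cross (_root_.star (id : σ → σ)) A.fn with hg
      have hL := overline_concat g a l b
      have h1 : NEStr.lastLetter (overline g (a, l ++ [b])) = g (a, l ++ [b]) := by
        rw [← lastLetter_toList _ (overline g (a, l ++ [b])).1, hL]
        simp
      have h2 : (NEStr.toList (overline g (a, l ++ [b]))).dropLast
          = NEStr.toList (overline g (a, l)) := by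
        rw [hL, List.dropLast_concat]
      have h3 : (NEStr.toList ((a, l ++ [b]) : NEStr σ)).dropLast = a :: l := by
        simp only [NEStr.toList]
        exact dropLast_cons_concat a l b
      have hg' : g (a, l ++ [b]) = (b, A.θ ((a :: l).foldl A.δ A.init) b) := by
        simp [hg, cross, _root_.star, lastLetter_concat, Aut.fn, NEStr.toList,
          dropLast_cons_concat]
      simp only [Aut.fn, pcomp, h1, h2, h3, hg', lastLetter_concat]
      rw [prod_run]
      simp [prodAut, ← hg]

lemma cascade_fn_eq_funComp_all : ∀ {σ γ : Type u} (C : Cascade σ γ),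
    C.toAut.fn = C.funComp
  | _, _, .single A => rfl
  | _, _, .cons A rest => by
      show (prodAut A rest.toAut).fn = _
      rw [prodAut_fn, cascade_fn_eq_funComp_all rest]
      rfl

end Aux

/-- The string function implemented by an automata cascade with `d ≥ 2`
components equals `overline(I* × A₁) ∘ overline(I* × A₂) ∘ ⋯ ∘
overline(I* × A_{d−1}) ∘ A_d`. -/


theorem cascade_fn_eq_funComp {σ γ : Type u} (C : Cascade σ γ)
    (hd : 2 ≤ C.length) : C.toAut.fn = C.funComp :=
  cascade_fn_eq_funComp_all C
end

section
/- Let C = A_1 ⋉ ⋯ ⋉ A_d be a class of automata cascades where A_i = A(Φ_i, Δ_i, Θ_i; a_i, m_i, Π_i, Γ_i), each Δ_i a finite class of semiautomata, viewed as a class of string functions on nonempty strings of length at most M. Then the growth of C satisfies G(C, ℓ) ≤ ∏_{i=1}^{d} C(a_i, m_i) · |Δ_i| · G(Φ_i, ℓ·M) · G(Θ_i, ℓ·M), where C(a_i, m_i) is the binomial coefficient. -/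
universe u

/-- The growth `G(F, ℓ)` of a class of functions. -/
noncomputable def growth {α β : Type*} (F : Set (α → β)) (ℓ : ℕ) : ℕ∞ :=
  ⨆ xs : Fin ℓ → α, ((fun f => fun i => f (xs i)) '' F).encard

/-- A class of string functions viewed as a class of functions on nonempty
strings of length at most `M` (by restricting the domain). -/
def restrictLen {σ γ : Type*} (M : ℕ) (F : Set (NEStr σ → γ)) :
    Set ({w : NEStr σ // (NEStr.toList w).length ≤ M} → γ) :=
  (fun f => fun w => f w.1) '' F

/-- A semiautomaton over the internal alphabet `Pi` with states `Q`. -/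
structure Semiauto (Pi Q : Type u) where
  δ : Q → Pi → Q
  init : Q

/-- The function implemented by a semiautomaton. -/
def Semiauto.run {Pi Q : Type u} (D : Semiauto Pi Q) : List Pi → Q :=
  fun w => w.foldl D.δ D.init

/-- An automaton over the factored input alphabet `X^a`. -/
structure FAut (X : Type u) (a m : ℕ) (Pi Q Γ : Type u) where
  J : Finset (Fin a)
  hJ : J.card = m
  φ : (Fin m → X) → Pi
  sa : Semiauto Pi Q
  θ : Q × (Fin m → X) → Γ

/-- The projection `π_J : X^a → X^m` onto the coordinates in `J` (in order). -/
def proj {X : Type u} {a m : ℕ} (J : Finset (Fin a)) (hJ : J.card = m)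
    (σ : Fin a → X) : Fin m → X :=
  fun i => σ (J.orderIsoOfFin hJ i).val

/-- The string function implemented by an automaton over a factored alphabet. -/
def FAut.run {X : Type u} {a m : ℕ} {Pi Q Γ : Type u} (A : FAut X a m Pi Q Γ) :
    NEStr (Fin a → X) → Γ :=
  fun w =>
    A.θ (A.sa.run ((NEStr.toList w).dropLast.map fun σ => A.φ (proj A.J A.hJ σ)),
         proj A.J A.hJ (NEStr.lastLetter w))

/-- The data `(m, Π, Q, Φ, Δ, Θ)` specifying a class of automata over a factored
alphabet with domain `X` and output alphabet `Out` (the arity is supplied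
separately). -/
structure Spec (X Out : Type u) : Type (u + 1) where
  m : ℕ
  Pi : Type u
  Q : Type u
  Phi : Set ((Fin m → X) → Pi)
  Delta : Set (Semiauto Pi Q)
  Theta : Set (Q × (Fin m → X) → Out)

/-- The string functions implemented by the automata in the class
`𝒜(Φ, Δ, Θ; k, m, Π, Γ)` described by a spec `s` at input arity `k`. -/
def specFuns {X Out : Type u} (k : ℕ) (s : Spec X Out) :
    Set (NEStr (Fin k → X) → Out) :=
  {f | ∃ A : FAut X k s.m s.Pi s.Q Out,
        A.φ ∈ s.Phi ∧ A.sa ∈ s.Delta ∧ A.θ ∈ s.Theta ∧ f = FAut.run A}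

/-- The class of string functions implemented by cascades `𝒜₁ ⋉ ⋯ ⋉ 𝒜_d` whose
`i`-th component is drawn from the class described by the `i`-th spec (the last
component has output alphabet `Γ`, the preceding ones output `X`, which is
appended to the input tuple passed on to the next component; the `i`-th
component thus has input arity `k + i − 1`). -/
def cascadeClass {X Γ : Type u} (lastS : Spec X Γ) :
    (specs : List (Spec X X)) → (k : ℕ) → Set (NEStr (Fin k → X) → Γ)
  | [], k => specFuns k lastS
  | s :: rest, k =>
    {F | ∃ f ∈ specFuns k s, ∃ g ∈ cascadeClass lastS rest (k + 1),
      F = pcomp (overline fun w => Fin.snoc (NEStr.lastLetter w) (f w)) g}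

/-- The factor `C(k, m_i) · |Δ_i| · G(Φ_i, ℓΦ) · G(Θ_i, ℓΘ)` contributed by one
cascade component. -/
noncomputable def specTerm {X Out : Type u} (k ℓΦ ℓΘ : ℕ) (s : Spec X Out) : ℕ∞ :=
  (Nat.choose k s.m : ℕ∞) * s.Delta.encard * growth s.Phi ℓΦ * growth s.Theta ℓΘ

lemma encard_biUnion_le {γ ι : Type*} (I : Finset ι) (f : ι → Set γ) :
    (⋃ i ∈ I, f i).encard ≤ ∑ i ∈ I, (f i).encard := by
  classical
  induction I using Finset.induction with
  | empty => simp
  | @insert a s ha ih =>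
    rw [Finset.sum_insert ha, Finset.set_biUnion_insert]
    exact le_trans (Set.encard_union_le _ _) (add_le_add le_rfl ih)

lemma count_range {τ : Type*} {γ ι : Type*} (f : τ → γ) (g : τ → ι) (a b : ℕ∞)
    (ha : (Set.range g).encard ≤ a)
    (hb : ∀ i : ι, (Set.range (fun x : {x : τ // g x = i} => f x.1)).encard ≤ b) :
    (Set.range f).encard ≤ a * b := by
  classical
  by_cases hfin : (Set.range g).Finite
  · have hsub : Set.range f ⊆ ⋃ i ∈ hfin.toFinset, Set.range (fun x : {x : τ // g x = i} => f x.1) := by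
      rintro _ ⟨x, rfl⟩
      exact Set.mem_biUnion (hfin.mem_toFinset.mpr ⟨x, rfl⟩) ⟨⟨x, rfl⟩, rfl⟩
    calc (Set.range f).encard ≤ _ := Set.encard_mono hsub
      _ ≤ ∑ i ∈ hfin.toFinset, (Set.range (fun x : {x : τ // g x = i} => f x.1)).encard :=
          encard_biUnion_le _ _
      _ ≤ hfin.toFinset.card • b := Finset.sum_le_card_nsmul _ _ _ (fun i _ => hb i)
      _ = (hfin.toFinset.card : ℕ∞) * b := by rw [nsmul_eq_mul]
      _ ≤ a * b := by
          apply mul_le_mul' _ le_rfl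
          rw [← hfin.encard_eq_coe_toFinset_card]; exact ha
  · rcases Set.eq_empty_or_nonempty (Set.range f) with h | ⟨y, x, rfl⟩
    · simp [h]
    · have hb1 : 1 ≤ b := le_trans (by
        rw [Set.one_le_encard_iff_nonempty]
        exact ⟨f x, ⟨x, rfl⟩, rfl⟩) (hb (g x))
      have haT : a = ⊤ := by
        have := Set.Infinite.encard_eq hfin
        rw [this] at ha; exact top_le_iff.mp ha
      rw [haT]
      calc (Set.range f).encard ≤ ⊤ := le_top
        _ = ⊤ * b := (ENat.top_mul (by intro h; rw [h] at hb1; simp at hb1)).symm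

lemma N_le_growth {α β : Type*} (F : Set (α → β)) (n : ℕ) (xs : Fin n → α) :
    ((fun f => fun i => f (xs i)) '' F).encard ≤ growth F n :=
  le_iSup (fun xs : Fin n → α => ((fun f => fun i => f (xs i)) '' F).encard) xs


lemma proj_congr {X : Type u} {k m : ℕ} {J J' : Finset (Fin k)} (h : J = J')
    (hJ : J.card = m) (hJ' : J'.card = m) :
    (proj J hJ : (Fin k → X) → Fin m → X) = proj J' hJ' := by subst h; rfl

lemma lemA {X Out : Type u} (s : Spec X Out) (k n p : ℕ) (hnp : n ≤ p)
    (ws : Fin n → NEStr (Fin k → X)) (letters : Fin p → (Fin k → X))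
    (hcov : ∀ i, ∀ σ ∈ (ws i).toList, ∃ j, letters j = σ) :
    ((fun f => fun i : Fin n => f (ws i)) '' specFuns k s).encard ≤
      specTerm k p p s := by
  classical
  set T : Set (Fin n → Out) := (fun f => fun i : Fin n => f (ws i)) '' specFuns k s with hT
  have hW : ∀ t : ↥T, ∃ A : FAut X k s.m s.Pi s.Q Out,
      A.φ ∈ s.Phi ∧ A.sa ∈ s.Delta ∧ A.θ ∈ s.Theta ∧
      (t : Fin n → Out) = fun i => A.run (ws i) := by
    rintro ⟨t, f, ⟨A, h1, h2, h3, rfl⟩, rfl⟩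
    exact ⟨A, h1, h2, h3, rfl⟩
  choose A hφ hD hθ hrun using hW
  have key : T.encard = (Set.range (fun t : ↥T => (t : Fin n → Out))).encard := by
    rw [Subtype.range_coe]
  rw [key, specTerm, mul_assoc, mul_assoc]
  apply count_range _ (fun t => (A t).J)
  · -- J count
    have hsub : Set.range (fun t => (A t).J) ⊆
        ↑(Finset.powersetCard s.m (Finset.univ : Finset (Fin k))) := by
      rintro _ ⟨t, rfl⟩
      exact Finset.mem_coe.mpr (Finset.mem_powersetCard_univ.mpr (A t).hJ)
    calc (Set.range fun t => (A t).J).encard ≤ _ := Set.encard_mono hsub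
      _ = ((Finset.powersetCard s.m (Finset.univ : Finset (Fin k))).card : ℕ∞) :=
          Set.encard_coe_eq_coe_finsetCard _
      _ = (Nat.choose k s.m : ℕ∞) := by rw [Finset.card_powersetCard, Finset.card_fin]
  intro J₀
  apply count_range _ (fun x : {t : ↥T // (A t).J = J₀} => (A x.1).sa)
  · exact Set.encard_mono (by rintro _ ⟨x, rfl⟩; exact hD _)
  intro D₀
  set τ2 := {x : {t : ↥T // (A t).J = J₀} // (A x.1).sa = D₀} with hτ2
  apply count_range _ (fun y : τ2 =>
    (fun j : Fin p => (A y.1.1).φ (proj (A y.1.1).J (A y.1.1).hJ (letters j))))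
  · -- Phi count
    rcases isEmpty_or_nonempty τ2 with hE | hNE
    · rw [Set.range_eq_empty]; simp
    · obtain ⟨y₀⟩ := hNE
      have hJ₀ : J₀.card = s.m := y₀.1.2 ▸ (A y₀.1.1).hJ
      have hsub : Set.range (fun y : τ2 =>
          (fun j : Fin p => (A y.1.1).φ (proj (A y.1.1).J (A y.1.1).hJ (letters j)))) ⊆
          (fun φ => fun j : Fin p => φ (proj J₀ hJ₀ (letters j))) '' s.Phi := by
        rintro _ ⟨y, rfl⟩
        refine ⟨(A y.1.1).φ, hφ _, ?_⟩
        have hJy : (A y.1.1).J = J₀ := y.1.2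
        funext j
        have e : (proj J₀ hJ₀ : (Fin k → X) → Fin s.m → X) = proj (A y.1.1).J (A y.1.1).hJ := proj_congr hJy.symm hJ₀ (A y.1.1).hJ
        rw [e]
      exact le_trans (Set.encard_mono hsub) (N_le_growth s.Phi p _)
  intro v
  -- Theta count
  rcases isEmpty_or_nonempty {y : τ2 // (fun j : Fin p =>
      (A y.1.1).φ (proj (A y.1.1).J (A y.1.1).hJ (letters j))) = v} with hE | hNE
  · rw [Set.range_eq_empty]; simp
  · obtain ⟨z₀⟩ := hNE
    have hJ₀ : J₀.card = s.m := z₀.1.1.2 ▸ (A z₀.1.1.1).hJ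
    set pts : Fin p → s.Q × (Fin s.m → X) := fun j =>
      if h : (j : ℕ) < n then
        (D₀.run (((ws ⟨j, h⟩).toList.dropLast.attach).map fun σp =>
            v (hcov ⟨j, h⟩ σp.1 (List.dropLast_subset _ σp.2)).choose),
         proj J₀ hJ₀ (NEStr.lastLetter (ws ⟨j, h⟩)))
      else (D₀.init, proj J₀ hJ₀ (letters j)) with hpts
    have hsub : Set.range (fun z : {y : τ2 // (fun j : Fin p =>
          (A y.1.1).φ (proj (A y.1.1).J (A y.1.1).hJ (letters j))) = v} =>
          ((z.1.1.1 : ↥T) : Fin n → Out)) ⊆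
        (fun u : Fin p → Out => fun i : Fin n => u (Fin.castLE hnp i)) ''
          ((fun θ => fun j : Fin p => θ (pts j)) '' s.Theta) := by
      rintro _ ⟨z, rfl⟩
      refine ⟨fun j => (A z.1.1.1).θ (pts j), ⟨(A z.1.1.1).θ, hθ _, rfl⟩, ?_⟩
      show _ = ((z.1.1.1 : ↥T) : Fin n → Out)
      rw [hrun z.1.1.1]
      funext i
      have hic : ((Fin.castLE hnp i : Fin p) : ℕ) < n := i.isLt
      simp only [hpts, hic, dif_pos]
      have hJy : (A z.1.1.1).J = J₀ := z.1.1.2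
      have eproj : (proj J₀ hJ₀ : (Fin k → X) → Fin s.m → X) = proj (A z.1.1.1).J (A z.1.1.1).hJ := proj_congr hJy.symm hJ₀ (A z.1.1.1).hJ
      have hDz : (A z.1.1.1).sa = D₀ := z.1.2
      have hv := z.2
      have hieta : (⟨((Fin.castLE hnp i : Fin p) : ℕ), hic⟩ : Fin n) = i := by
        ext; rfl
      rw [hieta]
      have hlist : ((ws i).toList.dropLast.attach).map (fun σp =>
            v (hcov i σp.1 (List.dropLast_subset _ σp.2)).choose) =
          (ws i).toList.dropLast.map (fun σ => (A z.1.1.1).φ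
            (proj (A z.1.1.1).J (A z.1.1.1).hJ σ)) := by
        rw [← List.attach_map_val (l := (ws i).toList.dropLast)
          (f := fun σ => (A z.1.1.1).φ (proj (A z.1.1.1).J (A z.1.1.1).hJ σ))]
        apply List.map_congr_left
        rintro ⟨σ, hσ⟩ _
        have hch := (hcov i σ (List.dropLast_subset _ hσ)).choose_spec
        conv_lhs => rw [← hv]
        simp only
        rw [hch]
      rw [FAut.run, hlist, eproj, hDz]
    calc _ ≤ _ := Set.encard_mono hsub
      _ ≤ ((fun θ => fun j : Fin p => θ (pts j)) '' s.Theta).encard :=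
          Set.encard_image_le _ _
      _ ≤ growth s.Theta p := N_le_growth s.Theta p pts

lemma idx_lt {i j ℓ M : ℕ} (hi : i < ℓ) (hj : j < M) : i * M + j < ℓ * M :=
  calc i * M + j < i * M + M := by omega
    _ = (i + 1) * M := by ring
    _ ≤ ℓ * M := Nat.mul_le_mul_right M hi

lemma idx_div {M : ℕ} (hM : 0 < M) (i j : ℕ) (hj : j < M) : (i * M + j) / M = i := by
  rw [mul_comm, Nat.mul_add_div hM, Nat.div_eq_of_lt hj, Nat.add_zero]

lemma idx_mod (M i j : ℕ) (hj : j < M) : (i * M + j) % M = j := by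
  rw [mul_comm, Nat.mul_add_mod, Nat.mod_eq_of_lt hj]

def lettersOf {σ : Type u} {ℓ M : ℕ} (hM : 0 < M)
    (xs : Fin ℓ → {w : NEStr σ // (NEStr.toList w).length ≤ M}) : Fin (ℓ * M) → σ :=
  fun e => (NEStr.toList (xs ⟨(e : ℕ) / M, (Nat.div_lt_iff_lt_mul hM).mpr e.isLt⟩).1).getD
    ((e : ℕ) % M) (xs ⟨(e : ℕ) / M, (Nat.div_lt_iff_lt_mul hM).mpr e.isLt⟩).1.1

lemma lettersOf_cov {σ : Type u} {ℓ M : ℕ} (hM : 0 < M)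
    (xs : Fin ℓ → {w : NEStr σ // (NEStr.toList w).length ≤ M}) (i : Fin ℓ) (σ' : σ)
    (h : σ' ∈ NEStr.toList (xs i).1) : ∃ j : Fin (ℓ * M), lettersOf hM xs j = σ' := by
  obtain ⟨⟨r, hr⟩, hget⟩ := List.mem_iff_get.mp h
  have hrM : r < M := lt_of_lt_of_le hr (xs i).2
  refine ⟨⟨(i : ℕ) * M + r, idx_lt i.isLt hrM⟩, ?_⟩
  have h1 : ((i : ℕ) * M + r) / M = (i : ℕ) := idx_div hM _ _ hrM
  have h2 : ((i : ℕ) * M + r) % M = r := idx_mod _ _ _ hrM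
  simp only [lettersOf, h1, h2, Fin.eta]
  rw [List.getD_eq_getElem _ _ (by exact hr)]
  rw [← hget]
  rfl

lemma one_le_specTerm {X Out : Type u} (k : ℕ) (s : Spec X Out)
    (h : (specFuns k s).Nonempty) : 1 ≤ specTerm k 0 0 s := by
  obtain ⟨f, A, h1, h2, h3, rfl⟩ := h
  have hm : s.m ≤ k := by
    have := A.hJ ▸ Finset.card_le_univ A.J
    simpa using this
  have c1 : (1 : ℕ∞) ≤ (Nat.choose k s.m : ℕ∞) := by
    exact_mod_cast Nat.one_le_iff_ne_zero.mpr (Nat.choose_pos hm).ne'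
  have c2 : 1 ≤ s.Delta.encard := Set.one_le_encard_iff_nonempty.mpr ⟨A.sa, h2⟩
  have c3 : 1 ≤ growth s.Phi 0 := by
    rw [growth]
    refine le_trans ?_ (le_iSup _ (fun i : Fin 0 => i.elim0))
    exact Set.one_le_encard_iff_nonempty.mpr ⟨_, ⟨A.φ, h1, rfl⟩⟩
  have c4 : 1 ≤ growth s.Theta 0 := by
    rw [growth]
    refine le_trans ?_ (le_iSup _ (fun i : Fin 0 => i.elim0))
    exact Set.one_le_encard_iff_nonempty.mpr ⟨_, ⟨A.θ, h3, rfl⟩⟩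
  calc (1 : ℕ∞) = 1 * 1 * 1 * 1 := by ring
    _ ≤ _ := mul_le_mul' (mul_le_mul' (mul_le_mul' c1 c2) c3) c4

lemma one_le_cascade {X Γ : Type u} (lastS : Spec X Γ) :
    ∀ (specs : List (Spec X X)) (k : ℕ), (cascadeClass lastS specs k).Nonempty →
    1 ≤ (∏ i : Fin specs.length, specTerm (k + i) 0 0 (specs.get i)) *
        specTerm (k + specs.length) 0 0 lastS
  | [], k, h => by
    simpa using one_le_specTerm k lastS h
  | s :: rest, k, h => by
    obtain ⟨F, f, hf, g, hg, rfl⟩ := h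
    have h1 := one_le_specTerm k s ⟨f, hf⟩
    have h2 := one_le_cascade lastS rest (k + 1) ⟨g, hg⟩
    show 1 ≤ (∏ i : Fin (rest.length + 1), specTerm (k + (i : ℕ)) 0 0 ((s :: rest).get i)) *
        specTerm (k + (rest.length + 1)) 0 0 lastS
    rw [Fin.prod_univ_succ]
    simp only [Fin.val_succ, List.get_cons_succ, Fin.val_zero, Nat.add_zero, List.get_cons_zero]
    have e1 : (∏ x : Fin rest.length, specTerm (k + ((x : ℕ) + 1)) 0 0 ((s :: rest).get x.succ)) =
        ∏ i : Fin rest.length, specTerm (k + 1 + (i : ℕ)) 0 0 (rest.get i) :=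
      Finset.prod_congr rfl fun i _ => by
        simp [show k + ((i : ℕ) + 1) = k + 1 + (i : ℕ) from by omega]
    have e2 : specTerm (k + (rest.length + 1)) 0 0 lastS =
        specTerm (k + 1 + rest.length) 0 0 lastS := by
      rw [show k + (rest.length + 1) = k + 1 + rest.length from by omega]
    rw [e1, e2, mul_assoc]
    calc (1 : ℕ∞) = 1 * 1 := (one_mul 1).symm
      _ ≤ _ := mul_le_mul' h1 h2


/-- Growth bound for a class of automata cascades viewed as string functions on
nonempty strings of length at most `M`:
`G(𝒞, ℓ) ≤ ∏_{i=1}^{d} C(a_i, m_i) · |Δ_i| · G(Φ_i, ℓ·M) · G(Θ_i, ℓ·M)`. -/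
theorem growth_cascadeClass_le {X Γ : Type u} (k M ℓ : ℕ)
    (specs : List (Spec X X)) (lastS : Spec X Γ)
    (hfin : ∀ s ∈ specs, s.Delta.Finite) (hlast : lastS.Delta.Finite) :
    growth (restrictLen M (cascadeClass lastS specs k)) ℓ ≤
      (∏ i : Fin specs.length,
          specTerm (k + i) (ℓ * M) (ℓ * M) (specs.get i)) *
        specTerm (k + specs.length) (ℓ * M) (ℓ * M) lastS := by
  classical
  clear hfin hlast
  rcases Nat.eq_zero_or_pos ℓ with rfl | hℓ
  · -- ℓ = 0
    simp only [Nat.zero_mul]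
    apply iSup_le; intro xs
    rcases Set.eq_empty_or_nonempty
      ((fun f => fun i => f (xs i)) '' restrictLen M (cascadeClass lastS specs k)) with
      hE | ⟨t, F, hF, rfl⟩
    · rw [hE]; simp
    · obtain ⟨G, hG, rfl⟩ := hF
      refine le_trans ?_ (one_le_cascade lastS specs k ⟨G, hG⟩)
      refine le_trans (Set.encard_mono (fun a _ => ?_))
        (Set.encard_singleton ((fun i => (fun w => G w.1) (xs i)))).le
      refine Set.mem_singleton_iff.mpr ?_
      funext i0; exact i0.elim0
  rcases Nat.eq_zero_or_pos M with rfl | hM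
  · -- M = 0, ℓ > 0
    have hE : IsEmpty {w : NEStr (Fin k → X) // (NEStr.toList w).length ≤ 0} :=
      ⟨fun w => by have h := w.2; simp [NEStr.toList] at h⟩
    have hE2 : IsEmpty (Fin ℓ → {w : NEStr (Fin k → X) // (NEStr.toList w).length ≤ 0}) :=
      ⟨fun xs => hE.false (xs ⟨0, hℓ⟩)⟩
    rw [growth, iSup_of_empty]
    exact bot_le
  induction specs generalizing k with
  | nil =>
    apply iSup_le; intro xs
    have himg : ((fun f => fun i => f (xs i)) '' restrictLen M (cascadeClass lastS [] k)) =
        ((fun f => fun i : Fin ℓ => f ((xs i).1)) '' specFuns k lastS) := by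
      rw [show cascadeClass lastS [] k = specFuns k lastS from rfl, restrictLen, Set.image_image]
    rw [himg]
    refine le_trans (lemA lastS k ℓ (ℓ * M) (Nat.le_mul_of_pos_right ℓ hM)
      (fun i => (xs i).1) (lettersOf hM xs)
      (fun i σ h => lettersOf_cov hM xs i σ h)) ?_
    simp
  | cons s rest ih =>
    have hRHS : (∏ i : Fin (s :: rest).length,
          specTerm (k + (i : ℕ)) (ℓ*M) (ℓ*M) ((s :: rest).get i)) *
        specTerm (k + (s :: rest).length) (ℓ*M) (ℓ*M) lastS
        = specTerm k (ℓ*M) (ℓ*M) s *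
          ((∏ i : Fin rest.length, specTerm (k + 1 + (i : ℕ)) (ℓ*M) (ℓ*M) (rest.get i)) *
            specTerm (k + 1 + rest.length) (ℓ*M) (ℓ*M) lastS) := by
      show (∏ i : Fin (rest.length + 1),
          specTerm (k + (i : ℕ)) (ℓ*M) (ℓ*M) ((s :: rest).get i)) * _ = _
      rw [Fin.prod_univ_succ]
      simp only [Fin.val_succ, Fin.val_zero, Nat.add_zero, List.get_cons_zero]
      have e1 : (∏ x : Fin rest.length,
            specTerm (k + ((x : ℕ) + 1)) (ℓ*M) (ℓ*M) ((s :: rest).get x.succ)) =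
          ∏ i : Fin rest.length, specTerm (k + 1 + (i : ℕ)) (ℓ*M) (ℓ*M) (rest.get i) :=
        Finset.prod_congr rfl fun i _ => by
          simp [show k + ((i : ℕ) + 1) = k + 1 + (i : ℕ) from by omega]
      have e2 : specTerm (k + (s :: rest).length) (ℓ*M) (ℓ*M) lastS =
          specTerm (k + 1 + rest.length) (ℓ*M) (ℓ*M) lastS := by
        rw [show k + (s :: rest).length = k + 1 + rest.length from by
          rw [List.length_cons]; omega]
      rw [e1, e2, mul_assoc]
    rw [hRHS]
    have IH := ih (k + 1)
    set B := (∏ i : Fin rest.length, specTerm (k + 1 + (i : ℕ)) (ℓ*M) (ℓ*M) (rest.get i)) *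
        specTerm (k + 1 + rest.length) (ℓ*M) (ℓ*M) lastS with hB
    apply iSup_le; intro xs
    set T : Set (Fin ℓ → Γ) :=
      (fun f => fun i => f (xs i)) '' restrictLen M (cascadeClass lastS (s :: rest) k) with hT
    have hW : ∀ t : ↥T, ∃ (f : NEStr (Fin k → X) → X) (g : NEStr (Fin (k+1) → X) → Γ),
        f ∈ specFuns k s ∧ g ∈ cascadeClass lastS rest (k+1) ∧
        (t : Fin ℓ → Γ) =
          fun i => g (overline (fun w => Fin.snoc (NEStr.lastLetter w) (f w)) (xs i).1) := by
      rintro ⟨t, F', ⟨F, ⟨f, hf, g, hg, rfl⟩, rfl⟩, rfl⟩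
      exact ⟨f, g, hf, hg, rfl⟩
    choose f g hf hg hrun using hW
    have hdiv : ∀ e : Fin (ℓ * M), (e : ℕ) / M < ℓ :=
      fun e => (Nat.div_lt_iff_lt_mul hM).mpr e.isLt
    set pref : Fin (ℓ * M) → NEStr (Fin k → X) := fun e =>
      ((xs ⟨(e : ℕ)/M, hdiv e⟩).1.1, (xs ⟨(e : ℕ)/M, hdiv e⟩).1.2.take ((e : ℕ) % M)) with hpref
    have hpref_eq : ∀ (e : Fin (ℓ*M)) (i : Fin ℓ) (j : ℕ), j < M → (e : ℕ) = (i : ℕ)*M + j →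
        pref e = ((xs i).1.1, (xs i).1.2.take j) := by
      intro e i j hj he
      have h1 : (e : ℕ)/M = (i : ℕ) := by rw [he, idx_div hM _ _ hj]
      have h2 : (e : ℕ)%M = j := by rw [he, idx_mod _ _ _ hj]
      simp only [hpref, h1, h2, Fin.eta]
      rfl
    set g1 : ↥T → (Fin (ℓ*M) → (Fin (k+1) → X)) := fun t e =>
      Fin.snoc (NEStr.lastLetter (pref e)) (f t (pref e)) with hg1
    have key : T.encard = (Set.range (fun t : ↥T => (t : Fin ℓ → Γ))).encard := by
      rw [Subtype.range_coe]
    rw [key]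
    apply count_range _ g1
    · have hsub : Set.range g1 ⊆
          (fun u : Fin (ℓ*M) → X => fun e => Fin.snoc (NEStr.lastLetter (pref e)) (u e)) ''
          ((fun f' => fun e : Fin (ℓ*M) => f' (pref e)) '' specFuns k s) := by
        rintro _ ⟨t, rfl⟩
        exact ⟨fun e => f t (pref e), ⟨f t, hf t, rfl⟩, rfl⟩
      calc (Set.range g1).encard ≤ _ := Set.encard_mono hsub
        _ ≤ ((fun f' => fun e : Fin (ℓ*M) => f' (pref e)) '' specFuns k s).encard :=
            Set.encard_image_le _ _
        _ ≤ specTerm k (ℓ*M) (ℓ*M) s := by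
            refine lemA s k (ℓ*M) (ℓ*M) le_rfl pref (lettersOf hM xs) ?_
            intro e σ hσ
            have hmem : σ ∈ NEStr.toList (xs ⟨(e : ℕ)/M, hdiv e⟩).1 := by
              simp only [hpref, NEStr.toList] at hσ ⊢
              rcases List.mem_cons.mp hσ with h | h
              · exact h ▸ List.mem_cons_self
              · exact List.mem_cons_of_mem _ (List.take_subset _ _ h)
            exact lettersOf_cov hM xs _ σ hmem
    · intro v
      have hjpf : ∀ (i : Fin ℓ) (jp : {x // x ∈ List.range (xs i).1.2.length}),
          (i : ℕ)*M + (jp.1 + 1) < ℓ*M := by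
        intro i jp
        have hj := List.mem_range.mp jp.2
        have hlen := (xs i).2
        simp only [NEStr.toList, List.length_cons] at hlen
        exact idx_lt i.isLt (by omega)
      set strV : Fin ℓ → NEStr (Fin (k+1) → X) := fun i =>
        (v ⟨(i : ℕ)*M, by simpa using idx_lt i.isLt hM⟩,
         (List.range (xs i).1.2.length).attach.map fun jp =>
           v ⟨(i : ℕ)*M + (jp.1 + 1), hjpf i jp⟩) with hstrV
      have hstr_len : ∀ i, (NEStr.toList (strV i)).length ≤ M := by
        intro i
        have hlen := (xs i).2
        simp only [NEStr.toList, List.length_cons] at hlen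
        simp only [hstrV, NEStr.toList, List.length_cons, List.length_map,
          List.length_attach, List.length_range]
        omega
      set xs' : Fin ℓ → {w : NEStr (Fin (k+1) → X) // (NEStr.toList w).length ≤ M} :=
        fun i => ⟨strV i, hstr_len i⟩ with hxs'
      have hsub : Set.range (fun z : {t : ↥T // g1 t = v} => ((z.1 : ↥T) : Fin ℓ → Γ)) ⊆
          (fun G => fun i => G (xs' i)) '' restrictLen M (cascadeClass lastS rest (k+1)) := by
        rintro _ ⟨z, rfl⟩
        refine ⟨fun w => g z.1 w.1, ⟨g z.1, hg z.1, rfl⟩, ?_⟩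
        show (fun i => g z.1 (strV i)) = ((z.1 : ↥T) : Fin ℓ → Γ)
        rw [hrun z.1]
        funext i
        have hv := z.2
        have hve : ∀ (e : Fin (ℓ*M)) (j : ℕ), j < M → (e : ℕ) = (i : ℕ)*M + j →
            v e = Fin.snoc (NEStr.lastLetter ((xs i).1.1, (xs i).1.2.take j))
                  (f z.1 ((xs i).1.1, (xs i).1.2.take j)) := by
          intro e j hj he
          conv_lhs => rw [← hv]
          simp only [hg1]
          rw [hpref_eq e i j hj he]
        have hstr : strV i =
            overline (fun w => Fin.snoc (NEStr.lastLetter w) (f z.1 w)) (xs i).1 := by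
          simp only [hstrV]
          unfold overline
          refine congrArg₂ Prod.mk ?_ ?_
          · refine (hve ⟨(i : ℕ)*M, by simpa using idx_lt i.isLt hM⟩ 0 hM (by simp)).trans ?_
            rw [List.take_zero]
          · conv_rhs => rw [← List.attach_map_val]
            apply List.map_congr_left
            rintro ⟨j, hjmem⟩ _
            have hjlen : j < (xs i).1.2.length := List.mem_range.mp hjmem
            have hlen := (xs i).2
            simp only [NEStr.toList, List.length_cons] at hlen
            exact hve ⟨(i : ℕ)*M + (j + 1), hjpf i ⟨j, hjmem⟩⟩ (j + 1) (by omega) rfl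
        exact congrArg (g z.1) hstr
      calc _ ≤ _ := Set.encard_mono hsub
        _ ≤ growth (restrictLen M (cascadeClass lastS rest (k+1))) ℓ := N_le_growth _ ℓ xs'
        _ ≤ B := IH
end

section
/- Let F be a class of functions from a set X to a set Y. Then for every ℓ, the growth of the binarisation of F is bounded by the growth of F: G(F_bin, ℓ) ≤ G(F, ℓ). -/
/-- The binarisation of a class of functions: `f_bin(x, y) = [f x = y]`. -/
def binClass {α β : Type*} (F : Set (α → β)) : Set (α × β → Prop) :=
  (fun f => fun p => f p.1 = p.2) '' F

/-- The growth of the binarisation of a class of functions is bounded by the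
growth of the class itself: `G(F_bin, ℓ) ≤ G(F, ℓ)`. -/
theorem growth_binClass_le {α β : Type*} (F : Set (α → β)) (ℓ : ℕ) :
    growth (binClass F) ℓ ≤ growth F ℓ := by
  refine iSup_le fun xs => ?_
  have h : ((fun f => fun i => f (xs i)) '' binClass F) =
      (fun v : Fin ℓ → β => fun i => v i = (xs i).2) ''
        ((fun f => fun i => f (xs i).1) '' F) := by
    simp only [binClass, Set.image_image]
  rw [h]
  calc ((fun v : Fin ℓ → β => fun i => v i = (xs i).2) ''
        ((fun f => fun i => f (xs i).1) '' F)).encard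
      ≤ ((fun f => fun i => f (xs i).1) '' F).encard := Set.encard_image_le _ _
    _ ≤ growth F ℓ :=
      le_iSup (fun ys : Fin ℓ → α => ((fun f => fun i => f (ys i)) '' F).encard)
        (fun i => (xs i).1)
end

section
/- Every counter-free automaton A over a finite input alphabet Σ is captured by an automaton A′ over Σ whose core semiautomaton is a cascade product D₁ ⋉ ⋯ ⋉ D_d in which every component D_i is a flip-flop semiautomaton; that is, there exist flip-flop components D_i and an output function θ′ such that the resulting automaton implements the same string function as A. -/
universe u

/-- A semiautomaton over the input alphabet `σ`: a set of states, a transition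
function, and an initial state. -/
structure SemiAut (σ : Type u) : Type (u + 1) where
  Q : Type u
  δ : Q → σ → Q
  init : Q

/-- The cascade product `D₁ ⋉ D₂` of a semiautomaton over `σ` and a
semiautomaton over `σ × Q₁`: states `Q₁ × Q₂`, initial state `⟨q₁, q₂⟩`, and
transition `δ(⟨p, q⟩, s) = ⟨δ₁(p, s), δ₂(q, ⟨s, p⟩)⟩`. -/
def cascProd {σ : Type u} (D₁ : SemiAut.{u} σ) (D₂ : SemiAut.{u} (σ × D₁.Q)) :
    SemiAut.{u} σ where
  Q := D₁.Q × D₂.Q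
  δ := fun p s => (D₁.δ p.1 s, D₂.δ p.2 (s, p.1))
  init := (D₁.init, D₂.init)

/-- A flip-flop semiautomaton: it has exactly two states, and every input
letter acts on the states either as the identity or as a constant map. -/
def IsFlipFlop {σ : Type u} (E : SemiAut σ) : Prop :=
  (∃ q₀ q₁ : E.Q, q₀ ≠ q₁ ∧ ∀ q, q = q₀ ∨ q = q₁) ∧
  ∀ s : σ, (∀ q, E.δ q s = q) ∨ ∃ c, ∀ q, E.δ q s = c

/-- Semiautomata expressed as (left-associated) cascade products
`D₁ ⋉ ⋯ ⋉ D_d` in which every component `D_i` is a flip-flop. -/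
inductive IsFFCascade : ∀ {σ : Type u}, SemiAut σ → Prop
  | base {σ : Type u} (D : SemiAut σ) : IsFlipFlop D → IsFFCascade D
  | step {σ : Type u} (D : SemiAut σ) (E : SemiAut (σ × D.Q)) :
      IsFFCascade D → IsFlipFlop E → IsFFCascade (cascProd D E)

/-- An automaton with input alphabet `σ` and output alphabet `γ`. -/
structure Automaton (σ γ : Type u) : Type (u + 1) where
  Q : Type u
  δ : Q → σ → Q
  init : Q
  θ : Q → σ → γ

/-- The core semiautomaton of an automaton. -/
def Automaton.core {σ γ : Type u} (A : Automaton σ γ) : SemiAut σ :=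
  ⟨A.Q, A.δ, A.init⟩

/-- The string function implemented by an automaton:
`A(σ₁ … σₘ) = θ(δ(q_init, σ₁ … σₘ₋₁), σₘ)`. -/
def Automaton.fn {σ γ : Type u} (A : Automaton σ γ) : NEStr σ → γ :=
  fun w => A.θ ((NEStr.toList w).dropLast.foldl A.δ A.init) (NEStr.lastLetter w)

/-- The `n`-fold concatenation `wⁿ` of a string with itself. -/
def npow {σ : Type u} (w : List σ) : ℕ → List σ
  | 0 => []
  | n + 1 => w ++ npow w n

/-- An automaton is counter-free if for every string `w`, every state `q`, and
every `n ≥ 1`, `δ(q, wⁿ) = q` implies `δ(q, w) = q`. -/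
def CounterFree {σ γ : Type u} (A : Automaton σ γ) : Prop :=
  ∀ (w : List σ) (q : A.Q) (n : ℕ), 1 ≤ n →
    (npow w n).foldl A.δ q = q → w.foldl A.δ q = q


/-! ### Infrastructure on flip-flop cascades -/

section Infra

theorem isFFCascade_reinit {A : Type u} {C : SemiAut A} (hC : IsFFCascade C) :
    ∀ p : C.Q, IsFFCascade (⟨C.Q, C.δ, p⟩ : SemiAut A) := by
  induction hC with
  | base D hff => exact fun p => .base _ hff
  | step D E hD hE ih =>
      intro p
      exact .step ⟨D.Q, D.δ, p.1⟩ ⟨E.Q, E.δ, p.2⟩ (ih p.1) hE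

/-- Congruence for cascades: pointwise-equal transition functions (on the same state
type) and an arbitrary new initial state. -/
theorem isFFCascade_ext {A : Type u} {Q : Type u} {d d' : Q → A → Q} {i i' : Q}
    (h : IsFFCascade (⟨Q, d, i⟩ : SemiAut A)) (hd : ∀ q a, d q a = d' q a) :
    IsFFCascade (⟨Q, d', i'⟩ : SemiAut A) := by
  have : d = d' := funext fun q => funext fun a => hd q a
  subst this
  exact isFFCascade_reinit h i'

open Classical in
theorem isFFCascade_override {A : Type u} {C : SemiAut A} (hC : IsFFCascade C) :
    ∀ (sel : A → Prop) (t : C.Q),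
      IsFFCascade (⟨C.Q, fun q a => if sel a then t else C.δ q a, C.init⟩ : SemiAut A) := by
  induction hC with
  | base D hff =>
      intro sel t
      refine .base _ ⟨hff.1, fun a => ?_⟩
      by_cases h : sel a
      · exact Or.inr ⟨t, fun q => if_pos h⟩
      · rcases hff.2 a with h' | ⟨cst, h'⟩
        · exact Or.inl fun q => by
            show (if sel a then t else D.δ q a) = q
            rw [if_neg h]; exact h' q
        · exact Or.inr ⟨cst, fun q => by
            show (if sel a then t else D.δ q a) = cst
            rw [if_neg h]; exact h' q⟩
  | step D E hD hE ih =>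
      intro sel t
      have hE' : IsFlipFlop (⟨E.Q, fun q a => if sel a.1 then t.2 else E.δ q a, E.init⟩ :
          SemiAut (A × D.Q)) := by
        refine ⟨hE.1, fun a => ?_⟩
        by_cases h : sel a.1
        · exact Or.inr ⟨t.2, fun q => by
            show (if sel a.1 then t.2 else E.δ q a) = t.2
            rw [if_pos h]⟩
        · rcases hE.2 a with h' | ⟨cst, h'⟩
          · exact Or.inl fun q => by
              show (if sel a.1 then t.2 else E.δ q a) = q
              rw [if_neg h]; exact h' q
          · exact Or.inr ⟨cst, fun q => by
              show (if sel a.1 then t.2 else E.δ q a) = cst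
              rw [if_neg h]; exact h' q⟩
      refine isFFCascade_ext
        (IsFFCascade.step ⟨D.Q, fun q a => if sel a then t.1 else D.δ q a, D.init⟩
          ⟨E.Q, fun q a => if sel a.1 then t.2 else E.δ q a, E.init⟩ (ih sel t.1) hE')
        (fun q a => ?_)
      by_cases h : sel a <;> simp [cascProd, h] <;> rfl

/-- Joining a cascade `C₁` over `A` with a cascade `C₂` over `τ`, where letters for `C₂`
are produced from the letter and the current `C₁`-state by `g`. -/
theorem isFFCascade_join : ∀ {τ : Type u} {C₂ : SemiAut τ}, IsFFCascade C₂ →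
    ∀ {A : Type u} (C₁ : SemiAut A), IsFFCascade C₁ → ∀ (g : A → C₁.Q → τ),
    ∃ (C : SemiAut A) (e : C.Q ≃ C₁.Q × C₂.Q), IsFFCascade C ∧
      ∀ (p : C.Q) (a : A), e (C.δ p a) =
        (C₁.δ (e p).1 a, C₂.δ (e p).2 (g a (e p).1)) := by
  intro τ C₂ h₂
  induction h₂ with
  | base E hff =>
      intro A C₁ h₁ g
      exact ⟨cascProd C₁ ⟨E.Q, fun q pa => E.δ q (g pa.1 pa.2), E.init⟩,
        Equiv.refl _, .step _ _ h₁ ⟨hff.1, fun pa => hff.2 _⟩, fun p a => rfl⟩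
  | step D E hD hE ih =>
      intro A C₁ h₁ g
      obtain ⟨C', e', hC', comm'⟩ := ih C₁ h₁ g
      refine ⟨cascProd C' ⟨E.Q, fun q pa => E.δ q (g pa.1 (e' pa.2).1, (e' pa.2).2), E.init⟩,
        ⟨fun p => ((e' p.1).1, ((e' p.1).2, p.2)),
         fun x => (e'.symm (x.1, x.2.1), x.2.2),
         fun p => by simp; rfl,
         fun x => by simp; rfl⟩,
        .step _ _ hC' ⟨hE.1, fun pa => hE.2 _⟩, ?_⟩
      intro p a
      have h' := comm' p.1 a
      show ((e' (C'.δ p.1 a)).1, ((e' (C'.δ p.1 a)).2,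
        E.δ p.2 (g a (e' p.1).1, (e' p.1).2))) = _
      rw [h']
      rfl

end Infra

/-! ### Aperiodic monoids and local divisors -/

/-- A monoid is aperiodic if every element has an idempotent-stabilizing power. -/
def Aper (M : Type u) [Monoid M] : Prop := ∀ m : M, ∃ n : ℕ, m ^ (n + 1) = m ^ n

theorem aper_unit {M : Type u} [Monoid M] (hM : Aper M) {c z : M} (h : c * z = 1) :
    c = 1 := by
  have hk : ∀ k : ℕ, c ^ k * z ^ k = 1 := by
    intro k
    induction k with
    | zero => simp
    | succ k ih =>
        calc c ^ (k + 1) * z ^ (k + 1) = c ^ k * ((c * z) * z ^ k) := by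
              rw [pow_succ, pow_succ']; rw [mul_assoc, mul_assoc]
          _ = c ^ k * z ^ k := by rw [h, one_mul]
          _ = 1 := ih
  obtain ⟨n, hn⟩ := hM c
  calc c = c * (c ^ n * z ^ n) := by rw [hk, mul_one]
    _ = c ^ (n + 1) * z ^ n := by rw [← mul_assoc, ← pow_succ']
    _ = c ^ n * z ^ n := by rw [hn]
    _ = 1 := hk n

section LocalDivisor

variable {M : Type u} [Monoid M]

/-- Membership in the local divisor `cM ∩ Mc`. -/
def LocMem (c : M) (x : M) : Prop := (∃ u, x = c * u) ∧ (∃ v, x = v * c)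

/-- The chosen `u` with `x = c * u`. -/
noncomputable def locTail (c : M) (x : {x : M // LocMem c x}) : M :=
  Classical.choose x.2.1

theorem locTail_spec (c : M) (x : {x : M // LocMem c x}) : x.val = c * locTail c x :=
  Classical.choose_spec x.2.1

theorem loc_welldef {c x : M} (hx : ∃ v, x = v * c) {u u' : M} (h : c * u = c * u') :
    x * u = x * u' := by
  obtain ⟨v, rfl⟩ := hx
  rw [mul_assoc, mul_assoc, h]

/-- Identity of the local divisor: `c` itself. -/
def locOne (c : M) : {x : M // LocMem c x} :=
  ⟨c, ⟨1, (mul_one c).symm⟩, ⟨1, (one_mul c).symm⟩⟩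

/-- Multiplication of the local divisor: `(xc) ⊙ (cy) = xcy`. -/
noncomputable def locMul (c : M) (x y : {x : M // LocMem c x}) : {x : M // LocMem c x} :=
  ⟨x.val * locTail c y,
    ⟨Classical.choose x.2.1 * locTail c y, by
      rw [← mul_assoc, ← Classical.choose_spec x.2.1]⟩,
    (by
      obtain ⟨vx, hx⟩ := x.2.2
      obtain ⟨vy, hy⟩ := y.2.2
      exact ⟨vx * vy, by rw [hx, mul_assoc, ← locTail_spec, hy, ← mul_assoc]⟩)⟩

theorem locMul_val (c : M) (x y : {x : M // LocMem c x}) {u : M} (hu : y.val = c * u) :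
    (locMul c x y).val = x.val * u := by
  show x.val * locTail c y = x.val * u
  exact loc_welldef x.2.2 (by rw [← locTail_spec, hu])

/-- The local divisor monoid structure on `cM ∩ Mc`. -/
noncomputable def locMonoid (c : M) : Monoid {x : M // LocMem c x} where
  one := locOne c
  mul := locMul c
  mul_assoc x y z := by
    apply Subtype.ext
    show (locMul c (locMul c x y) z).val = (locMul c x (locMul c y z)).val
    rw [locMul_val c _ z (locTail_spec c z),
      locMul_val c x (locMul c y z)
        (show (locMul c y z).val = c * (locTail c y * locTail c z) by
          rw [locMul_val c y z (locTail_spec c z), locTail_spec c y, mul_assoc]),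
      locMul_val c x y (locTail_spec c y), mul_assoc]
  one_mul y := by
    apply Subtype.ext
    show (locMul c (locOne c) y).val = y.val
    rw [locMul_val c _ y (locTail_spec c y)]
    exact (locTail_spec c y).symm
  mul_one x := by
    apply Subtype.ext
    show (locMul c x (locOne c)).val = x.val
    rw [locMul_val c x (locOne c) (show (locOne c).val = c * 1 by rw [mul_one]; rfl),
      mul_one]

theorem loc_one_val (c : M) :
    letI := locMonoid c
    ((1 : {x : M // LocMem c x}) : M) = c := by
  letI := locMonoid c
  rfl

theorem loc_mul_val (c : M) (x y : {x : M // LocMem c x}) {u : M} (hu : y.val = c * u) :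
    letI := locMonoid c
    ((x * y : {x : M // LocMem c x}) : M) = x.val * u :=
  locMul_val c x y hu

theorem loc_pow_val (c : M) (x : {x : M // LocMem c x}) :
    letI := locMonoid c
    ∀ n : ℕ, ((x ^ (n + 1) : {x : M // LocMem c x}) : M) = x.val * (locTail c x) ^ n := by
  letI := locMonoid c
  intro n
  induction n with
  | zero => rw [pow_one, pow_zero, mul_one]
  | succ n ih =>
      rw [pow_succ, loc_mul_val c _ x (locTail_spec c x), ih, mul_assoc, ← pow_succ]

theorem loc_aper (c : M) (hM : Aper M) :
    letI := locMonoid c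
    Aper {x : M // LocMem c x} := by
  letI := locMonoid c
  intro x
  obtain ⟨n, hn⟩ := hM (locTail c x)
  refine ⟨n + 1, Subtype.ext ?_⟩
  rw [loc_pow_val, loc_pow_val, hn]

end LocalDivisor

/-! ### Covers of right-multiplication dynamics by flip-flop cascades -/

/-- `h : A → M` admits a good cover: a flip-flop cascade over `A` together with a
decoding map `φ`, a section `ι`, and an invariant set `R` of states, such that on `R`
the decoded state evolves by right multiplication by `h`. -/
def GoodCover {A M : Type u} [Monoid M] (h : A → M) : Prop :=
  ∃ C : SemiAut A, IsFFCascade C ∧ ∃ (φ : C.Q → M) (ι : M → C.Q) (R : C.Q → Prop),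
    (∀ m, R (ι m)) ∧ (∀ p a, R p → R (C.δ p a)) ∧ (∀ m, φ (ι m) = m) ∧
    (∀ p a, R p → φ (C.δ p a) = φ p * h a)

theorem cover_run {A M : Type u} [Monoid M] (h : A → M) (C : SemiAut A)
    (φ : C.Q → M) (R : C.Q → Prop)
    (hRδ : ∀ p a, R p → R (C.δ p a)) (hφδ : ∀ p a, R p → φ (C.δ p a) = φ p * h a) :
    ∀ (w : List A) (p : C.Q), R p →
      φ (w.foldl C.δ p) = w.foldl (fun x a => x * h a) (φ p) := by
  intro w
  induction w with
  | nil => intro p _; rfl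
  | cons a w ih =>
      intro p hp
      simp only [List.foldl_cons]
      rw [ih _ (hRδ p a hp), hφδ p a hp]

/-- A single flip-flop whose letters all act as the identity. -/
def idFF (A : Type u) : SemiAut A := ⟨ULift Bool, fun q _ => q, ⟨false⟩⟩

theorem idFF_flip (A : Type u) : IsFlipFlop (idFF A) :=
  ⟨⟨⟨false⟩, ⟨true⟩, fun h => Bool.noConfusion (congrArg ULift.down h), fun q => by
      cases q with
      | up b => cases b
                · exact Or.inl rfl
                · exact Or.inr rfl⟩,
    fun _ => Or.inl fun _ => rfl⟩

/-- An `n+1`-fold cascade of identity flip-flops. -/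
def idCasc (A : Type u) : ℕ → SemiAut A
  | 0 => idFF A
  | n + 1 => cascProd (idCasc A n) (idFF _)

theorem idCasc_ff (A : Type u) (n : ℕ) : IsFFCascade (idCasc A n) := by
  induction n with
  | zero => exact .base _ (idFF_flip A)
  | succ n ih => exact .step _ _ ih (idFF_flip _)

theorem idCasc_δ (A : Type u) (n : ℕ) : ∀ (p : (idCasc A n).Q) a, (idCasc A n).δ p a = p := by
  induction n with
  | zero => intro p a; rfl
  | succ n ih =>
      intro p a
      show ((idCasc A n).δ p.1 a, p.2) = p
      rw [ih p.1 a]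
      exact Prod.mk.eta

theorem idCasc_inj (A : Type u) (n : ℕ) :
    ∃ f : (Fin (n + 1) → Bool) → (idCasc A n).Q, Function.Injective f := by
  induction n with
  | zero =>
      refine ⟨fun v => ⟨v 0⟩, fun v w hvw => funext fun i => ?_⟩
      have h0 : v 0 = w 0 := congrArg ULift.down hvw
      rwa [Fin.eq_zero i]
  | succ n ih =>
      obtain ⟨f, hf⟩ := ih
      refine ⟨fun v => (f (v ∘ Fin.castSucc), ⟨v (Fin.last _)⟩), fun v w hvw => ?_⟩
      have h1 : f (v ∘ Fin.castSucc) = f (w ∘ Fin.castSucc) := congrArg Prod.fst hvw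
      have h2 : v (Fin.last _) = w (Fin.last _) := congrArg (ULift.down ∘ Prod.snd) hvw
      have h3 := hf h1
      funext i
      refine Fin.lastCases ?_ ?_ i
      · exact h2
      · intro j; exact congrFun h3 j

/-- Base case: if all letters act trivially, `h` has a good cover. -/
theorem goodCover_of_trivial {A M : Type u} [Monoid M] [Fintype M] (h : A → M)
    (htriv : ∀ a, h a = 1) : GoodCover h := by
  classical
  set n := Fintype.card M with hn
  obtain ⟨f, hf⟩ := idCasc_inj A n
  have hcard : Fintype.card M ≤ Fintype.card (Fin (n + 1) → Bool) := by
    rw [Fintype.card_fun, Fintype.card_bool, Fintype.card_fin]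
    calc Fintype.card M ≤ 2 ^ n := le_of_lt (Nat.lt_two_pow_self (n := n))
      _ ≤ 2 ^ (n + 1) := Nat.pow_le_pow_right (by norm_num) (Nat.le_succ n)
  obtain ⟨emb⟩ := Function.Embedding.nonempty_of_card_le hcard
  set ι : M → (idCasc A n).Q := fun m => f (emb m) with hι
  have hinj : Function.Injective ι := fun m m' he => emb.injective (hf he)
  refine ⟨idCasc A n, idCasc_ff A n, Function.invFun ι, ι, fun _ => True,
    fun _ => trivial, fun _ _ _ => trivial, fun m => Function.leftInverse_invFun hinj m,
    fun p a _ => ?_⟩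
  rw [idCasc_δ A n p a, htriv a, mul_one]

/-- Main lemma: any letter-to-monoid map into a finite aperiodic monoid admits a
good cover by a flip-flop cascade. -/
theorem goodCover_main : ∀ (k : ℕ) {M : Type u} [Monoid M] [Fintype M], Aper M →
    ∀ {A : Type u} (h : A → M),
      Fintype.card M * (Fintype.card M + 1) + (Set.range h \ {1}).ncard ≤ k →
      GoodCover h := by
  intro k
  induction k with
  | zero =>
      intro M _ _ _ A h hk
      have h1 := Fintype.card_pos (α := M)
      have h2 : 0 < Fintype.card M * (Fintype.card M + 1) := Nat.mul_pos h1 (by omega)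
      omega
  | succ k ih =>
      intro M _ _ hM A h hk
      classical
      by_cases hc : ∀ a, h a = 1
      · exact goodCover_of_trivial h hc
      push_neg at hc
      obtain ⟨a₀, ha₀⟩ := hc
      set c : M := h a₀ with hc_def
      -- the two letter maps with smaller measure over M
      set h₂ : A → M := fun a => if h a = c then 1 else h a with hh₂
      set h₁ : A × ULift.{u} Bool → M := fun x => if x.2.down = true then 1 else h₂ x.1
        with hh₁
      -- measure bookkeeping
      have hc_mem : c ∈ Set.range h \ {1} := ⟨⟨a₀, rfl⟩, ha₀⟩
      have hlt : ((Set.range h \ {1}) \ {c}).ncard < (Set.range h \ {1}).ncard :=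
        Set.ncard_diff_singleton_lt_of_mem hc_mem (Set.toFinite _)
      have hsub₂ : Set.range h₂ \ {1} ⊆ (Set.range h \ {1}) \ {c} := by
        rintro x ⟨⟨a, rfl⟩, hx1⟩
        simp only [Set.mem_singleton_iff] at hx1
        by_cases hac : h a = c
        · exact absurd (by rw [hh₂]; simp [hac]) hx1
        · have hxa : h₂ a = h a := by rw [hh₂]; simp [hac]
          refine ⟨⟨⟨a, hxa.symm⟩, ?_⟩, ?_⟩
          · rw [Set.mem_singleton_iff]
            intro h1; exact hx1 h1
          · rw [Set.mem_singleton_iff]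
            intro h1; exact hac (hxa.symm.trans h1)
      have hs₂ : (Set.range h₂ \ {1}).ncard < (Set.range h \ {1}).ncard :=
        lt_of_le_of_lt (Set.ncard_le_ncard hsub₂ (Set.toFinite _)) hlt
      have hsub₁ : Set.range h₁ \ {1} ⊆ Set.range h₂ \ {1} := by
        rintro x ⟨⟨⟨a, f⟩, rfl⟩, hx1⟩
        simp only [Set.mem_singleton_iff] at hx1
        by_cases hf : f.down = true
        · exact absurd (by rw [hh₁]; simp [hf]) hx1
        · have hxa : h₁ (a, f) = h₂ a := by rw [hh₁]; simp [hf]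
          refine ⟨⟨a, hxa.symm⟩, ?_⟩
          rw [Set.mem_singleton_iff]
          intro h1; exact hx1 h1
      have hs₁ : (Set.range h₁ \ {1}).ncard < (Set.range h \ {1}).ncard :=
        lt_of_le_of_lt (Set.ncard_le_ncard hsub₁ (Set.toFinite _)) hs₂
      -- recursive covers over M
      have cov₀ : GoodCover h₁ := ih hM h₁ (by omega)
      have cov₁ : GoodCover h₂ := ih hM h₂ (by omega)
      -- the local divisor
      letI instS : Monoid {x : M // LocMem c x} := locMonoid c
      letI : Fintype {x : M // LocMem c x} := Subtype.fintype _
      have hSaper : Aper {x : M // LocMem c x} := loc_aper c hM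
      have hnotmem : ¬ LocMem c (1 : M) := by
        rintro ⟨⟨z, hz⟩, -⟩
        exact ha₀ (aper_unit hM hz.symm)
      have hScard : Fintype.card {x : M // LocMem c x} < Fintype.card M :=
        Fintype.card_subtype_lt hnotmem
      set h₃ : A × ULift.{u} Bool × M → {x : M // LocMem c x} := fun x =>
        if h x.1 = c ∧ x.2.1.down = true then
          ⟨c * x.2.2 * c, ⟨x.2.2 * c, mul_assoc c x.2.2 c⟩, ⟨c * x.2.2, rfl⟩⟩
        else 1 with hh₃
      have cov₂ : GoodCover h₃ := by
        refine ih hSaper h₃ ?_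
        have p0 : (Fintype.card {x : M // LocMem c x} + 1) *
            (Fintype.card {x : M // LocMem c x} + 1) =
            Fintype.card {x : M // LocMem c x} * (Fintype.card {x : M // LocMem c x} + 1)
            + Fintype.card {x : M // LocMem c x} + 1 := by ring
        have p1 : (Fintype.card {x : M // LocMem c x} + 1) *
            (Fintype.card {x : M // LocMem c x} + 1) ≤ Fintype.card M * Fintype.card M :=
          Nat.mul_le_mul hScard hScard
        have p2 : Fintype.card M * Fintype.card M ≤
            Fintype.card M * (Fintype.card M + 1) :=
          Nat.mul_le_mul_left _ (Nat.le_succ _)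
        have p3 : (Set.range h₃ \ {1}).ncard ≤ Fintype.card {x : M // LocMem c x} := by
          calc (Set.range h₃ \ {1}).ncard
              ≤ (Set.univ : Set {x : M // LocMem c x}).ncard :=
                Set.ncard_le_ncard (Set.subset_univ _) (Set.toFinite _)
            _ = Fintype.card {x : M // LocMem c x} := by
                rw [Set.ncard_univ, Nat.card_eq_fintype_card]
        omega
      -- unpack the three covers
      obtain ⟨C₀, hC₀ff, φ₀, ι₀, R₀, hRι₀, hRδ₀, hφι₀, hφδ₀⟩ := cov₀
      obtain ⟨C₁, hC₁ff, φ₁, ι₁, R₁, hRι₁, hRδ₁, hφι₁, hφδ₁⟩ := cov₁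
      obtain ⟨C₂, hC₂ff, φ₂, ι₂, R₂, hRι₂, hRδ₂, hφι₂, hφδ₂⟩ := cov₂
      -- the flag flip-flop
      set FF : SemiAut A := ⟨ULift Bool, fun q a => if h a = c then ⟨true⟩ else q, ⟨false⟩⟩
        with hFFdef
      have hFF : IsFFCascade FF := by
        refine .base _ ⟨⟨⟨false⟩, ⟨true⟩,
          fun hh => Bool.noConfusion (congrArg ULift.down hh), fun q => by
            cases q with
            | up b => cases b
                      · exact Or.inl rfl
                      · exact Or.inr rfl⟩, fun a => ?_⟩
        by_cases hac : h a = c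
        · exact Or.inr ⟨⟨true⟩, fun q => by
            show (if h a = c then (⟨true⟩ : ULift Bool) else q) = ⟨true⟩
            rw [if_pos hac]⟩
        · exact Or.inl fun q => by
            show (if h a = c then (⟨true⟩ : ULift Bool) else q) = q
            rw [if_neg hac]
      -- join flag with the prefix cover
      obtain ⟨J₁, e₁, hJ₁, comm₁⟩ :=
        isFFCascade_join hC₀ff FF hFF (fun a qf => (a, qf))
      -- block cover with reset on c-letters
      have hov : IsFFCascade (⟨C₁.Q, fun q a => if h a = c then ι₁ 1 else C₁.δ q a,
          C₁.init⟩ : SemiAut A) :=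
        isFFCascade_override hC₁ff (fun a => h a = c) (ι₁ 1)
      obtain ⟨J₂, e₂, hJ₂, comm₂⟩ := isFFCascade_join hov J₁ hJ₁ (fun a _ => a)
      -- local-divisor product cover
      obtain ⟨C, e₃, hC, comm₃⟩ := isFFCascade_join hC₂ff J₂ hJ₂
        (fun a p => (a, (e₁ (e₂ p).1).1, φ₁ (e₂ p).2))
      -- decoded components of a global state
      set F : C.Q → ULift.{u} Bool := fun p => (e₁ (e₂ (e₃ p).1).1).1 with hwF
      set Z0 : C.Q → C₀.Q := fun p => (e₁ (e₂ (e₃ p).1).1).2 with hwZ0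
      set Z1 : C.Q → C₁.Q := fun p => (e₂ (e₃ p).1).2 with hwZ1
      set Z2 : C.Q → C₂.Q := fun p => (e₃ p).2 with hwZ2
      -- single-step behaviour of the components
      have hst3 : ∀ p a, e₃ (C.δ p a) =
          (J₂.δ (e₃ p).1 a, C₂.δ (e₃ p).2 (a, (e₁ (e₂ (e₃ p).1).1).1, φ₁ (e₂ (e₃ p).1).2)) :=
        fun p a => comm₃ p a
      have hst2 : ∀ (x : J₂.Q) a, e₂ (J₂.δ x a) =
          (J₁.δ (e₂ x).1 a, if h a = c then ι₁ 1 else C₁.δ (e₂ x).2 a) :=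
        fun x a => comm₂ x a
      have hst1 : ∀ (y : J₁.Q) a, e₁ (J₁.δ y a) =
          ((if h a = c then (⟨true⟩ : ULift Bool) else (e₁ y).1),
            C₀.δ (e₁ y).2 (a, (e₁ y).1)) :=
        fun y a => comm₁ y a
      have stepF : ∀ p a, F (C.δ p a) = (if h a = c then ⟨true⟩ else F p) := by
        intro p a
        simp only [hwF, hst3, hst2, hst1]
      have stepZ0 : ∀ p a, Z0 (C.δ p a) = C₀.δ (Z0 p) (a, F p) := by
        intro p a
        simp only [hwZ0, hwF, hst3, hst2, hst1]
      have stepZ1 : ∀ p a, Z1 (C.δ p a) = (if h a = c then ι₁ 1 else C₁.δ (Z1 p) a) := by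
        intro p a
        simp only [hwZ1, hst3, hst2]
      have stepZ2 : ∀ p a, Z2 (C.δ p a) = C₂.δ (Z2 p) (a, F p, φ₁ (Z1 p)) := by
        intro p a
        simp only [hwZ2, hwF, hwZ1, hst3]
      -- global decode, section and invariant
      set Φ : C.Q → M := fun p =>
        if (F p).down = true then φ₀ (Z0 p) * (φ₂ (Z2 p)).val * φ₁ (Z1 p) else φ₀ (Z0 p)
        with hwΦ
      set I : M → C.Q := fun m =>
        e₃.symm (e₂.symm (e₁.symm (⟨false⟩, ι₀ m), ι₁ 1), ι₂ 1) with hwI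
      set RR : C.Q → Prop := fun p =>
        R₀ (Z0 p) ∧ R₁ (Z1 p) ∧ R₂ (Z2 p) ∧ ((F p).down = false → φ₂ (Z2 p) = 1) with hwRR
      have IF : ∀ m, F (I m) = ⟨false⟩ := by
        intro m; simp [hwF, hwI, Equiv.apply_symm_apply]
      have IZ0 : ∀ m, Z0 (I m) = ι₀ m := by
        intro m; simp [hwZ0, hwI, Equiv.apply_symm_apply]
      have IZ1 : ∀ m, Z1 (I m) = ι₁ 1 := by
        intro m; simp [hwZ1, hwI, Equiv.apply_symm_apply]
      have IZ2 : ∀ m, Z2 (I m) = ι₂ 1 := by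
        intro m; simp [hwZ2, hwI, Equiv.apply_symm_apply]
      refine ⟨C, hC, Φ, I, RR, ?_, ?_, ?_, ?_⟩
      · -- sections are good states
        intro m
        refine ⟨?_, ?_, ?_, ?_⟩
        · rw [IZ0]; exact hRι₀ m
        · rw [IZ1]; exact hRι₁ 1
        · rw [IZ2]; exact hRι₂ 1
        · intro _; rw [IZ2]; exact hφι₂ 1
      · -- the invariant is preserved
        intro p a hp
        obtain ⟨hp₀, hp₁, hp₂, hpc⟩ := hp
        refine ⟨?_, ?_, ?_, ?_⟩
        · rw [stepZ0]; exact hRδ₀ _ _ hp₀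
        · rw [stepZ1]
          by_cases hac : h a = c
          · rw [if_pos hac]; exact hRι₁ 1
          · rw [if_neg hac]; exact hRδ₁ _ _ hp₁
        · rw [stepZ2]; exact hRδ₂ _ _ hp₂
        · intro hfalse
          rw [stepF] at hfalse
          by_cases hac : h a = c
          · rw [if_pos hac] at hfalse
            exact absurd hfalse (by simp)
          · rw [if_neg hac] at hfalse
            rw [stepZ2, hφδ₂ _ _ hp₂]
            have : h₃ (a, F p, φ₁ (Z1 p)) = 1 := by
              rw [hh₃]
              exact if_neg (by rintro ⟨h1, -⟩; exact hac h1)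
            rw [this, mul_one]
            exact hpc hfalse
      · -- sections decode correctly
        intro m
        rw [hwΦ]
        simp only [IF, IZ0]
        rw [if_neg (by simp)]
        exact hφι₀ m
      · -- equivariance of the decode map on good states
        intro p a hp
        obtain ⟨hp₀, hp₁, hp₂, hpc⟩ := hp
        rw [hwΦ]
        simp only [stepF, stepZ0, stepZ1, stepZ2]
        rw [hφδ₀ _ _ hp₀, hφδ₂ _ _ hp₂]
        by_cases hac : h a = c
        · by_cases hf : (F p).down = true
          · -- a closed block is multiplied into the local divisor product
            have h3val : h₃ (a, F p, φ₁ (Z1 p)) =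
                ⟨c * φ₁ (Z1 p) * c, ⟨φ₁ (Z1 p) * c, mul_assoc c _ c⟩,
                  ⟨c * φ₁ (Z1 p), rfl⟩⟩ := by
              rw [hh₃]; exact if_pos ⟨hac, hf⟩
            simp [hac, hf, hh₁, h3val, hφι₁, mul_assoc]
            exact congrArg (fun z => φ₀ (Z0 p) * z) (loc_mul_val c (φ₂ (Z2 p)) _ rfl)
          · -- first c-letter: the local product starts at the identity
            have hf' : (F p).down = false := by
              cases hb : (F p).down
              · rfl
              · exact absurd hb hf
            have h3one : h₃ (a, F p, φ₁ (Z1 p)) = 1 := by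
              rw [hh₃]
              exact if_neg (by rintro ⟨-, h2⟩; exact hf h2)
            simp [hac, hf', h3one, hpc hf', hh₁, hh₂, hφι₁, loc_one_val]
        · have h3one : h₃ (a, F p, φ₁ (Z1 p)) = 1 := by
            rw [hh₃]
            exact if_neg (by rintro ⟨h1, -⟩; exact hac h1)
          by_cases hf : (F p).down = true
          · simp [hac, hf, hh₁, h3one, hφδ₁ _ _ hp₁, hh₂, mul_assoc]
          · have hf' : (F p).down = false := by
              cases hb : (F p).down
              · rfl
              · exact absurd hb hf
            simp [hac, hf', hh₁, hh₂, h3one]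

/-! ### From counter-free automata to aperiodic monoids -/

theorem endPow_apply {β : Type u} (f : Function.End β) :
    ∀ (n : ℕ) (q : β), (f ^ n) q = f^[n] q := by
  intro n
  induction n with
  | zero => intro q; rw [pow_zero]; rfl
  | succ n ihn =>
      intro q
      rw [pow_succ]
      show (f ^ n) (f q) = _
      rw [ihn (f q)]
      exact (Function.iterate_succ_apply (α := β) f n q).symm

theorem iterate_stab {Q : Type u} [Finite Q] (f : Q → Q)
    (hf : ∀ (q : Q) (k : ℕ), 1 ≤ k → f^[k] q = q → f q = q) :
    ∃ n : ℕ, f^[n + 1] = f^[n] := by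
  classical
  letI := Fintype.ofFinite Q
  refine ⟨Fintype.card Q, funext fun q => ?_⟩
  have key : ∀ i j : ℕ, i < j → f^[i] q = f^[j] q → f (f^[i] q) = f^[i] q := by
    intro i j hij hval
    have hfix : f^[j - i] (f^[i] q) = f^[i] q := by
      rw [← Function.iterate_add_apply, Nat.sub_add_cancel hij.le]
      exact hval.symm
    exact hf _ (j - i) (by omega) hfix
  obtain ⟨i, j, hij, hval⟩ :=
    Fintype.exists_ne_map_eq_of_card_lt
      (fun i : Fin (Fintype.card Q + 1) => f^[(i : ℕ)] q) (by simp)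
  have hfixed : ∃ i₀ : ℕ, i₀ ≤ Fintype.card Q ∧ f (f^[i₀] q) = f^[i₀] q := by
    rcases lt_or_gt_of_ne hij with hlt | hgt
    · exact ⟨i, by omega, key i j (by exact_mod_cast hlt) hval⟩
    · exact ⟨j, by omega, key j i (by exact_mod_cast hgt) hval.symm⟩
  obtain ⟨i₀, hi₀le, hi₀⟩ := hfixed
  have hconst : ∀ d : ℕ, f^[i₀ + d] q = f^[i₀] q := by
    intro d
    induction d with
    | zero => rfl
    | succ d ihd =>
        rw [show i₀ + (d + 1) = (i₀ + d) + 1 by omega, Function.iterate_succ_apply', ihd, hi₀]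
  calc f^[Fintype.card Q + 1] q = f^[i₀ + (Fintype.card Q + 1 - i₀)] q := by
        rw [Nat.add_sub_cancel' (by omega)]
    _ = f^[i₀] q := hconst _
    _ = f^[i₀ + (Fintype.card Q - i₀)] q := (hconst _).symm
    _ = f^[Fintype.card Q] q := by rw [Nat.add_sub_cancel' hi₀le]

theorem npow_foldl {σ γ : Type u} (A : Automaton σ γ) (w : List σ) :
    ∀ (k : ℕ) (q : A.Q), (npow w k).foldl A.δ q = (fun q => w.foldl A.δ q)^[k] q := by
  intro k
  induction k with
  | zero => intro q; rfl
  | succ k ihk =>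
      intro q
      show (w ++ npow w k).foldl A.δ q = _
      rw [List.foldl_append, ihk, ← Function.iterate_succ_apply]

/-- Krohn–Rhodes for counter-free automata: every counter-free automaton over a
finite input alphabet (with finitely many states) is captured by an automaton
whose core semiautomaton is a cascade product of flip-flop semiautomata: there
exist flip-flop components and an output function such that the resulting
automaton implements the same string function. -/
theorem counterFree_captured_by_flipflop_cascade {σ γ : Type u} [Finite σ]
    (A : Automaton σ γ) [Finite A.Q] (hA : CounterFree A) :
    ∃ (D : SemiAut σ) (θ' : D.Q → σ → γ), IsFFCascade D ∧
      ∀ w : NEStr σ, Automaton.fn ⟨D.Q, D.δ, D.init, θ'⟩ w = Automaton.fn A w := by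
  classical
  letI : Finite (Function.End A.Q) := inferInstanceAs (Finite (A.Q → A.Q))
  set h₀ : σ → (Function.End A.Q)ᵐᵒᵖ :=
    fun s => MulOpposite.op (fun q => A.δ q s) with hh₀
  set N := Submonoid.closure (Set.range h₀) with hN
  letI : Finite ((Function.End A.Q)ᵐᵒᵖ) :=
    Finite.of_equiv (Function.End A.Q) MulOpposite.opEquiv
  letI : Finite N := inferInstanceAs (Finite {x // x ∈ N})
  letI : Fintype N := Fintype.ofFinite N
  -- every element of `N` is represented by a word
  have hrep : ∀ x : (Function.End A.Q)ᵐᵒᵖ, x ∈ N →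
      ∃ w : List σ, x = MulOpposite.op (fun q => w.foldl A.δ q) := by
    intro x hx
    induction hx using Submonoid.closure_induction with
    | mem y hy =>
        obtain ⟨s, rfl⟩ := hy
        exact ⟨[s], rfl⟩
    | one => exact ⟨[], rfl⟩
    | mul y z hy hz ihy ihz =>
        obtain ⟨u, rfl⟩ := ihy
        obtain ⟨v, rfl⟩ := ihz
        refine ⟨u ++ v, ?_⟩
        apply MulOpposite.unop_injective
        funext q
        show v.foldl A.δ (u.foldl A.δ q) = (u ++ v).foldl A.δ q
        rw [List.foldl_append]
  -- counter-freeness makes `N` aperiodic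
  have aperN : Aper N := by
    intro x
    obtain ⟨w, hw⟩ := hrep x.val x.2
    set f : Function.End A.Q := fun q => w.foldl A.δ q with hf
    have hcf : ∀ (q : A.Q) (k : ℕ), 1 ≤ k → f^[k] q = q → f q = q := by
      intro q k hk hfix
      refine hA w q k hk ?_
      rw [npow_foldl A w k q]
      exact hfix
    obtain ⟨n, hn⟩ := iterate_stab f hcf
    refine ⟨n, ?_⟩
    apply Subtype.ext
    rw [SubmonoidClass.coe_pow, SubmonoidClass.coe_pow, hw]
    show MulOpposite.op (f ^ (n + 1)) = MulOpposite.op (f ^ n)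
    apply congrArg
    funext q
    rw [endPow_apply f (n + 1) q, endPow_apply f n q, hn]
  -- cover the Cayley dynamics of `N` by a flip-flop cascade
  set h' : σ → N := fun s => ⟨h₀ s, Submonoid.subset_closure ⟨s, rfl⟩⟩ with hh'
  obtain ⟨C, hCff, φ, ι, R, hRι, hRδ, hφι, hφδ⟩ :=
    goodCover_main
      (Fintype.card N * (Fintype.card N + 1) + (Set.range h' \ {1}).ncard)
      aperN h' le_rfl
  -- decoding the run of the cascade recovers the run of `A`
  have keyfold : ∀ (l : List σ) (x : N) (q : A.Q),
      (MulOpposite.unop ((l.foldl (fun y s => y * h' s) x) : N).val) q =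
        l.foldl A.δ ((MulOpposite.unop x.val) q) := by
    intro l
    induction l with
    | nil => intro x q; rfl
    | cons s l ihl =>
        intro x q
        rw [List.foldl_cons, List.foldl_cons, ihl]
        rfl
  refine ⟨⟨C.Q, C.δ, ι 1⟩, fun p s => A.θ ((MulOpposite.unop (φ p).val) A.init) s,
    isFFCascade_reinit hCff (ι 1), ?_⟩
  intro w
  have run := cover_run h' C φ R hRδ hφδ ((NEStr.toList w).dropLast) (ι 1) (hRι 1)
  show A.θ ((MulOpposite.unop (φ ((NEStr.toList w).dropLast.foldl C.δ (ι 1))).val) A.init)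
      (NEStr.lastLetter w) = _
  rw [run, hφι 1]
  rw [keyfold ((NEStr.toList w).dropLast) 1 A.init]
  rfl
end
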